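/- Let S be an affine algebra over an algebraically closed field, I a non-maximal proper ideal of S, and R = k + I. Then: (a) I is a maximal ideal of R; (b) for every maximal ideal 𝔫 of S containing I, one has 𝔫 ∩ R = I and √(I·S) = I ⊊ 𝔫; hence the set W = {𝔫 ∈ Max S : √((𝔫∩R)S) = 𝔫} equals the complement of Z(I) = {𝔫 ∈ Max S : 𝔫 ⊇ I}. -/

import Mathlib

/-- Let `S` be an affine integral domain over an algebraically closed field `k`, `I` a
proper, non-maximal, radical ideal of `S`, and `R = k + I` (the subalgebra generated by
`I`).  Then (a) `I` is a maximal ideal of `R`; (b) every maximal ideal `𝔫 ⊇ I` of `S`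
satisfies `𝔫 ∩ R = I ∩ R` and `√(I·S) = I ⊊ 𝔫`; and (c) the locus
`W = {𝔫 ∈ Max S | √((𝔫 ∩ R)S) = 𝔫}` is exactly the complement of
`Z(I) = {𝔫 ∈ Max S | 𝔫 ⊇ I}`. -/
theorem stmt_9 {k S : Type*} [Field k] [IsAlgClosed k] [CommRing S] [IsDomain S]
    [Algebra k S] [Algebra.FiniteType k S]
    (I : Ideal S) (hproper : I ≠ ⊤) (hnotmax : ¬ I.IsMaximal) (hrad : I.IsRadical)
    (R : Subalgebra k S) (hR : R = Algebra.adjoin k (I : Set S)) :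
    (Ideal.comap R.toSubring.subtype I).IsMaximal ∧
    (∀ n : Ideal S, n.IsMaximal → I ≤ n →
      n.comap R.toSubring.subtype = I.comap R.toSubring.subtype ∧
      (Ideal.map R.toSubring.subtype (I.comap R.toSubring.subtype)).radical = I ∧
      I < n) ∧
    (∀ n : Ideal S, n.IsMaximal →
      ((Ideal.map R.toSubring.subtype (n.comap R.toSubring.subtype)).radical = n
        ↔ ¬ I ≤ n)) := by
  have : IsJacobsonRing S := isJacobsonRing_of_finiteType (A := k)
  set f := R.toSubring.subtype with hf
  have hIR : ∀ x : S, x ∈ I → x ∈ R := fun x hx => hR ▸ Algebra.subset_adjoin hx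
  -- k ∩ I = 0
  have hcI : ∀ c : k, algebraMap k S c ∈ I → c = 0 := by
    intro c hc
    by_contra hc0
    exact hproper (I.eq_top_of_isUnit_mem hc ((isUnit_iff_ne_zero.mpr hc0).map (algebraMap k S)))
  -- structure of R
  have hRmem : ∀ x : S, x ∈ R → ∃ c : k, x - algebraMap k S c ∈ I := by
    intro x hx
    rw [hR] at hx
    induction hx using Algebra.adjoin_induction with
    | mem x hx => exact ⟨0, by simpa using hx⟩
    | algebraMap r => exact ⟨r, by simp⟩
    | add x y hx hy ihx ihy =>
      obtain ⟨c, hc⟩ := ihx; obtain ⟨d, hd⟩ := ihy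
      exact ⟨c + d, by rw [map_add]; convert I.add_mem hc hd using 1; ring⟩
    | mul x y hx hy ihx ihy =>
      obtain ⟨c, hc⟩ := ihx; obtain ⟨d, hd⟩ := ihy
      refine ⟨c * d, ?_⟩
      have : x * (y - algebraMap k S d) + (x - algebraMap k S c) * algebraMap k S d ∈ I :=
        I.add_mem (I.mul_mem_left x hd) (I.mul_mem_right _ hc)
      convert this using 1; rw [map_mul]; ring
  -- the map part of (b)
  have hmapI : Ideal.map f (I.comap f) = I := by
    refine le_antisymm Ideal.map_comap_le ?_
    intro y hy
    exact Ideal.mem_map_of_mem f (show (⟨y, hIR y hy⟩ : R) ∈ I.comap f from hy)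
  -- (a)
  have ha : (Ideal.comap f I).IsMaximal := by
    rw [Ideal.isMaximal_iff]
    constructor
    · intro h1
      exact hproper (I.eq_top_iff_one.mpr h1)
    · rintro J' x hle hx hxJ'
      obtain ⟨c, hc⟩ := hRmem (x : S) x.2
      have hc0 : c ≠ 0 := by
        rintro rfl
        exact hx (show (x : S) ∈ I by simpa using hc)
      have hiJ : (⟨(x : S) - algebraMap k S c, hIR _ hc⟩ : R) ∈ J' := hle hc
      have hcm : (⟨algebraMap k S c, R.algebraMap_mem c⟩ : R.toSubring) ∈ J' := by
        have := J'.sub_mem hxJ' hiJ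
        convert this using 1
        ext; simp
      have h2 := J'.mul_mem_left ⟨algebraMap k S c⁻¹, R.algebraMap_mem c⁻¹⟩ hcm
      have h3 : (⟨algebraMap k S c⁻¹, R.algebraMap_mem c⁻¹⟩ : R.toSubring) *
          ⟨algebraMap k S c, R.algebraMap_mem c⟩ = 1 := by
        ext
        push_cast
        rw [← map_mul, inv_mul_cancel₀ hc0, map_one]
      rwa [h3] at h2
  refine ⟨ha, ?_, ?_⟩
  · intro n hn hle
    have hcomap : n.comap f = I.comap f := by
      ext x
      simp only [Ideal.mem_comap]
      constructor
      · intro hx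
        obtain ⟨c, hc⟩ := hRmem (x : S) x.2
        have hcn : algebraMap k S c ∈ n := by
          have h2 := n.sub_mem hx (hle hc)
          convert h2 using 1
          show _ = (x : S) - ((x : S) - _)
          ring
        have hc0 : c = 0 := by
          by_contra hc0
          exact hn.ne_top (n.eq_top_of_isUnit_mem hcn
            ((isUnit_iff_ne_zero.mpr hc0).map (algebraMap k S)))
        exact (show (x : S) ∈ I by simpa [hc0] using hc)
      · exact fun hx => hle hx
    refine ⟨hcomap, by rw [hmapI, hrad.radical], lt_of_le_of_ne hle ?_⟩
    rintro rfl
    exact hnotmax hn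
  · intro n hn
    constructor
    · intro hradeq hle
      have hcomap : n.comap f = I.comap f := by
        ext x
        simp only [Ideal.mem_comap]
        constructor
        · intro hx
          obtain ⟨c, hc⟩ := hRmem (x : S) x.2
          have hcn : algebraMap k S c ∈ n := by
            have h2 := n.sub_mem hx (hle hc)
            convert h2 using 1
            show _ = (x : S) - ((x : S) - _)
            ring
          have hc0 : c = 0 := by
            by_contra hc0
            exact hn.ne_top (n.eq_top_of_isUnit_mem hcn
              ((isUnit_iff_ne_zero.mpr hc0).map (algebraMap k S)))
          exact (show (x : S) ∈ I by simpa [hc0] using hc)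
        · exact fun hx => hle hx
      rw [hcomap, hmapI, hrad.radical] at hradeq
      exact hnotmax (hradeq ▸ hn)
    · intro hnle
      set J := Ideal.map f (n.comap f) with hJ
      have hJn : J ≤ n := Ideal.map_comap_le
      -- element of I not in n
      obtain ⟨a, haI, han⟩ := Set.not_subset.mp hnle
      obtain ⟨y, i, hin, hyi⟩ := hn.exists_inv han
      have hx0I : y * a ∈ I := I.mul_mem_left y haI
      have hiR : i ∈ R := by
        have : i = 1 - y * a := by linear_combination hyi
        rw [this]
        exact R.sub_mem R.one_mem (hIR _ hx0I)
      have hiJ : i ∈ J := Ideal.mem_map_of_mem f (show (⟨i, hiR⟩ : R) ∈ n.comap f from hin)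
      rw [Ideal.radical_eq_jacobson]
      refine le_antisymm (sInf_le ⟨hJn, hn⟩) (le_sInf ?_)
      rintro m ⟨hJm, hm⟩
      -- show n ≤ m
      have hInm : ¬ I ≤ m := by
        intro hIm
        refine hm.ne_top (m.eq_top_iff_one.mpr ?_)
        have : y * a + i ∈ m := m.add_mem (hIm hx0I) (hJm hiJ)
        rwa [hyi] at this
      obtain ⟨b, hbI, hbm⟩ := Set.not_subset.mp hInm
      obtain ⟨z, j, hjm, hzj⟩ := hm.exists_inv hbm
      intro x hxn
      have hex : z * b * x ∈ m := by
        refine hJm (Ideal.mem_map_of_mem f (show (⟨z * b * x, ?_⟩ : R) ∈ n.comap f from ?_))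
        · exact hIR _ (I.mul_mem_right x (I.mul_mem_left z hbI))
        · exact n.mul_mem_left _ hxn
      have : x = z * b * x + j * x := by linear_combination x * hzj.symm
      rw [this]
      exact m.add_mem hex (m.mul_mem_right x hjm)
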